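/- Assume α̃ < 1 (hence 0 < r < 1). Then the conditional mean queue length in a working vacation period satisfies E[L₀] = (Σ_{k≥1} k·π_{k0}) / (Σ_{k≥0} π_{k0}) = p(0)θ̄ / (θ + θ̄μ_v(1−r)). -/

import Mathlib

set_option maxHeartbeats 1000000


/-- Geo/Geo/1 with multiple working vacations, partially observable case.
Conditional mean queue length in a working vacation period:
E[L₀] = (Σ_{k≥1} k π_{k0}) / (Σ_{k≥0} π_{k0}) = p(0)θ̄ / (θ + θ̄ μ_v (1-r)). -/
theorem stmt_8
    (p μb μv θ q0 q1 p0 p1 al be r K : ℝ) (π0 π1 : ℕ → ℝ)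
    (hp : p ∈ Set.Ioo (0:ℝ) 1) (hμb : μb ∈ Set.Ioo (0:ℝ) 1)
    (hμv : μv ∈ Set.Ioo (0:ℝ) 1) (hθ : θ ∈ Set.Ioo (0:ℝ) 1)
    (hq0 : q0 ∈ Set.Icc (0:ℝ) 1) (hq1 : q1 ∈ Set.Icc (0:ℝ) 1)
    (hp0 : p0 = p * q0) (hp1 : p1 = p * q1)
    (hp0m : p0 ∈ Set.Ioo (0:ℝ) 1) (hp1m : p1 ∈ Set.Ioo (0:ℝ) 1)
    (hal : al = p1 * (1 - μb) / ((1 - p1) * μb))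
    (hbe : be = θ / (1 - θ))
    (hr : r = (be + p0 * (1 - μv) + (1 - p0) * μv -
        Real.sqrt ((be + p0 * (1 - μv) + (1 - p0) * μv) ^ 2 -
          4 * p0 * (1 - p0) * μv * (1 - μv))) / (2 * (1 - p0) * μv))
    (hK : K = (1 - p1) * μb * (1 - r) * (1 - al) /
        ((1 - p1) * μb * (1 - r) * (1 - al) *
          (θ + (1 - θ) * (1 - p0) * μv * (1 - r) + p0 * (1 - θ)) + p0 * θ))
    (hπ00 : π0 0 = K * (θ + (1 - θ) * (1 - p0) * μv * (1 - r)))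
    (hπ0k : ∀ k : ℕ, 1 ≤ k → π0 k = K * p0 * (1 - θ) * (1 - r) * r ^ (k - 1))
    (hπ1k : ∀ k : ℕ, 1 ≤ k →
      π1 k = K * (p0 * θ / ((1 - p1) * μb)) * ∑ j ∈ Finset.range k, r ^ j * al ^ (k - 1 - j))
    (hal1 : al < 1) :
    Summable (fun k : ℕ => (k : ℝ) * π0 k) ∧
    (∑' k : ℕ, (k : ℝ) * π0 k) / (∑' k : ℕ, π0 k)
      = p0 * (1 - θ) / (θ + (1 - θ) * μv * (1 - r)) := by
  obtain ⟨hp0a, hp0b⟩ := hp0m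
  obtain ⟨hp1a, hp1b⟩ := hp1m
  obtain ⟨hμva, hμvb⟩ := hμv
  obtain ⟨hμba, hμbb⟩ := hμb
  obtain ⟨hθa, hθb⟩ := hθ
  have hθ1 : (0:ℝ) < 1 - θ := by linarith
  have hbe0 : 0 < be := by rw [hbe]; positivity
  set A : ℝ := (1 - p0) * μv with hA
  set C : ℝ := p0 * (1 - μv) with hC
  set B : ℝ := be + p0 * (1 - μv) + (1 - p0) * μv with hB
  have hA0 : 0 < A := mul_pos (by linarith) hμva
  have hC0 : 0 < C := mul_pos hp0a (by linarith)
  have hB0 : 0 < B := by rw [hB]; nlinarith [mul_pos hp0a (by linarith : (0:ℝ) < 1 - μv)]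
  have hBAC : B = be + C + A := by rw [hB]
  have hD : 0 ≤ B ^ 2 - 4 * p0 * (1 - p0) * μv * (1 - μv) := by
    have h1 : 4 * p0 * (1 - p0) * μv * (1 - μv) = 4 * A * C := by rw [hA, hC]; ring
    rw [h1]
    nlinarith [sq_nonneg (A - C), sq_nonneg be, mul_pos hbe0 (by linarith : (0:ℝ) < A + C)]
  set s : ℝ := Real.sqrt (B ^ 2 - 4 * p0 * (1 - p0) * μv * (1 - μv)) with hsdef
  have hs0 : 0 ≤ s := Real.sqrt_nonneg _
  have hs2 : s ^ 2 = B ^ 2 - 4 * A * C := by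
    rw [hsdef, Real.sq_sqrt hD, hA, hC]; ring
  have hrB : r = (B - s) / (2 * A) := by
    rw [hr]
    congr 1
    rw [hA]; ring
  have hrA : 2 * A * r = B - s := by
    rw [hrB]; field_simp
  have hs' : (B - 2 * A * r) ^ 2 = B ^ 2 - 4 * A * C := by
    rw [hrA]; linear_combination hs2
  have h4 : (4 * A) * (A * r ^ 2 - B * r + C) = 0 := by linear_combination hs'
  have hquad : A * r ^ 2 - B * r + C = 0 := by
    rcases mul_eq_zero.mp h4 with h | h
    · exact absurd h (by positivity)
    · exact h
  -- 0 < r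
  have hsB : s < B := by
    have h1 : s ^ 2 < B ^ 2 := by rw [hs2]; linarith [mul_pos hA0 hC0]
    exact lt_of_pow_lt_pow_left₀ 2 hB0.le h1
  have hr0 : 0 < r := by
    rw [hrB]; exact div_pos (by linarith) (by linarith)
  -- r < 1
  have hr1 : r < 1 := by
    have hkey : (B - 2 * A) ^ 2 < s ^ 2 := by
      rw [hs2, hBAC]; nlinarith [mul_pos hA0 hbe0]
    have h2 : B - 2 * A < s := lt_of_pow_lt_pow_left₀ 2 hs0 hkey
    rw [hrB, div_lt_one (by linarith)]
    linarith
  have hr1' : (0:ℝ) < 1 - r := by linarith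
  -- K > 0
  have hal0 : (0:ℝ) < 1 - al := by linarith
  have hNK : 0 < (1 - p1) * μb * (1 - r) * (1 - al) :=
    mul_pos (mul_pos (mul_pos (by linarith) hμba) hr1') hal0
  have hXK : 0 < θ + (1 - θ) * (1 - p0) * μv * (1 - r) + p0 * (1 - θ) := by
    nlinarith [mul_pos (mul_pos (mul_pos hθ1 (by linarith : (0:ℝ) < 1 - p0)) hμva) hr1',
      mul_pos hp0a hθ1]
  have hK0 : 0 < K := by
    rw [hK]
    exact div_pos hNK (by nlinarith [mul_pos hNK hXK, mul_pos hp0a hθa])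
  set c0 : ℝ := K * p0 * (1 - θ) * (1 - r) with hc0def
  have hc00 : 0 < c0 := mul_pos (mul_pos (mul_pos hK0 hp0a) hθ1) hr1'
  have hπ0succ : ∀ n : ℕ, π0 (n + 1) = c0 * r ^ n := by
    intro n
    rw [hπ0k (n + 1) (by omega)]
    simp [hc0def]
  have hrnorm : ‖r‖ < 1 := by rw [Real.norm_eq_abs, abs_of_pos hr0]; exact hr1
  have hsum_geo : Summable (fun n : ℕ => r ^ n) := summable_geometric_of_lt_one hr0.le hr1
  have hsum_n : Summable (fun n : ℕ => (n : ℝ) * r ^ n) := by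
    have := summable_pow_mul_geometric_of_norm_lt_one (R := ℝ) 1 hrnorm
    simpa using this
  have hfreq : ∀ n : ℕ, ((n + 1 : ℕ) : ℝ) * π0 (n + 1)
      = c0 * ((n : ℝ) * r ^ n) + c0 * r ^ n := by
    intro n
    rw [hπ0succ n]
    push_cast
    ring
  have hsum_f1 : Summable (fun n : ℕ => ((n + 1 : ℕ) : ℝ) * π0 (n + 1)) := by
    exact Summable.congr ((hsum_n.mul_left c0).add (hsum_geo.mul_left c0))
      (fun n => (hfreq n).symm)
  have hsumf : Summable (fun k : ℕ => (k : ℝ) * π0 k) :=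
    (summable_nat_add_iff 1).mp hsum_f1
  refine ⟨hsumf, ?_⟩
  have htsum_n : ∑' n : ℕ, (n : ℝ) * r ^ n = r / (1 - r) ^ 2 := by
    simpa using tsum_coe_mul_geometric_of_norm_lt_one hrnorm
  have htsum_geo : ∑' n : ℕ, r ^ n = (1 - r)⁻¹ := tsum_geometric_of_lt_one hr0.le hr1
  have hnum : ∑' k : ℕ, (k : ℝ) * π0 k = c0 / (1 - r) ^ 2 := by
    rw [Summable.tsum_eq_zero_add hsumf]
    have h1 : ∑' n : ℕ, ((n + 1 : ℕ) : ℝ) * π0 (n + 1)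
        = ∑' n : ℕ, (c0 * ((n : ℝ) * r ^ n) + c0 * r ^ n) := tsum_congr hfreq
    push_cast at h1 ⊢
    rw [h1, Summable.tsum_add (hsum_n.mul_left c0) (hsum_geo.mul_left c0),
      tsum_mul_left, tsum_mul_left, htsum_n, htsum_geo]
    field_simp
    ring
  have hsumπ0 : Summable π0 := by
    exact (summable_nat_add_iff 1).mp
      (Summable.congr (hsum_geo.mul_left c0) (fun n => (hπ0succ n).symm))
  have hden : ∑' k : ℕ, π0 k
      = K * (θ + (1 - θ) * (1 - p0) * μv * (1 - r)) + c0 / (1 - r) := by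
    rw [Summable.tsum_eq_zero_add hsumπ0, hπ00]
    congr 1
    rw [tsum_congr hπ0succ, tsum_mul_left, htsum_geo]
    field_simp
  rw [hnum, hden]
  have hbe' : be * (1 - θ) = θ := by rw [hbe]; field_simp
  have hident : (1 - r) * (θ + (1 - θ) * (1 - p0) * μv * (1 - r) + p0 * (1 - θ))
      = θ + (1 - θ) * μv * (1 - r) := by
    linear_combination (1 - θ) * hquad + r * hbe'
  have hX0 : (0:ℝ) < θ + (1 - θ) * μv * (1 - r) := by
    linarith [mul_pos (mul_pos hθ1 hμva) hr1']
  have e1 : c0 / (1 - r) ^ 2 = K * p0 * (1 - θ) / (1 - r) := by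
    rw [hc0def]
    field_simp
  have e0 : c0 / (1 - r) = K * p0 * (1 - θ) := by
    rw [hc0def, mul_div_assoc, div_self hr1'.ne', mul_one]
  have e2 : K * (θ + (1 - θ) * (1 - p0) * μv * (1 - r)) + c0 / (1 - r)
      = K * (θ + (1 - θ) * μv * (1 - r)) / (1 - r) := by
    rw [e0, eq_div_iff hr1'.ne']
    linear_combination K * hident
  rw [e1, e2]
  rw [div_div_div_eq]
  rw [div_eq_div_iff (by positivity) hX0.ne']
  ring
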